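/- Fix C ≥ 1 and let (a_p) be a sequence indexed by primes with values in [0, C]. Then there is a constant K depending only on C such that ∑_{n ≤ x} ∏_{p | n} a_p ≤ K · x · exp(∑_{p ≤ x} (a_p − 1)/p) for all x ≥ 1. -/

import Mathlib

open Finset

namespace SieveUpperAux


/-- primes in `Icc 1 N` are the primes below `N+1` -/
lemma filter_eq (N : ℕ) : (Icc 1 N).filter Nat.Prime = (range (N+1)).filter Nat.Prime := by
  ext p
  simp only [mem_filter, mem_Icc, mem_range]
  constructor
  · rintro ⟨⟨h1, h2⟩, hp⟩; exact ⟨Nat.lt_succ_of_le h2, hp⟩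
  · rintro ⟨h1, hp⟩; exact ⟨⟨hp.one_lt.le.trans' (by norm_num), Nat.lt_succ_iff.mp h1⟩, hp⟩

lemma theta_le (N : ℕ) : ∑ p ∈ (Icc 1 N).filter Nat.Prime, Real.log p ≤ N * Real.log 4 := by
  have h0 : ∀ p ∈ (range (N+1)).filter Nat.Prime, (p : ℝ) ≠ 0 := by
    intro p hp
    have := (mem_filter.mp hp).2.pos
    positivity
  have h1 : ∑ p ∈ (Icc 1 N).filter Nat.Prime, Real.log p = Real.log (primorial N) := by
    rw [filter_eq, ← Real.log_prod h0]
    congr 1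
    rw [primorial]
    push_cast
    rfl
  rw [h1]
  calc Real.log (primorial N) ≤ Real.log ((4:ℕ) ^ N) := by
        apply Real.log_le_log (by exact_mod_cast (primorial_pos N))
        exact_mod_cast primorial_le_4_pow N
    _ = N * Real.log 4 := by push_cast; rw [Real.log_pow]

/-- Mertens' first theorem, upper bound -/
lemma M1_le (N : ℕ) (hN : 1 ≤ N) :
    ∑ p ∈ (Icc 1 N).filter Nat.Prime, Real.log p / p ≤ Real.log N + Real.log 4 := by
  -- step 1: ∑_{p ≤ N} ⌊N/p⌋ log p ≤ log N!
  have hfac : ((Nat.factorial N) : ℝ) ≠ 0 := by positivity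
  have hlogfac : Real.log ((Nat.factorial N)) = ∑ p ∈ ((Nat.factorial N)).primeFactors,
      (((Nat.factorial N)).factorization p : ℝ) * Real.log p := by
    conv_lhs => rw [← Nat.factorization_prod_pow_eq_self (Nat.factorial_ne_zero N)]
    rw [Finsupp.prod, Nat.support_factorization]
    push_cast
    rw [Real.log_prod]
    · exact Finset.sum_congr rfl fun p hp => by
        rw [Real.log_pow]
    · intro p hp
      have := (Nat.prime_of_mem_primeFactors hp).pos
      positivity
  have hsub : (Icc 1 N).filter Nat.Prime ⊆ ((Nat.factorial N)).primeFactors := by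
    intro p hp
    obtain ⟨hmem, hprime⟩ := mem_filter.mp hp
    exact Nat.mem_primeFactors.mpr ⟨hprime,
      Nat.dvd_factorial hprime.pos (mem_Icc.mp hmem).2, Nat.factorial_ne_zero N⟩
  have hterm : ∀ p ∈ (Icc 1 N).filter Nat.Prime,
      ((N / p : ℕ) : ℝ) * Real.log p ≤ (((Nat.factorial N)).factorization p : ℝ) * Real.log p := by
    intro p hp
    obtain ⟨hmem, hprime⟩ := mem_filter.mp hp
    have hpN : p ≤ N := (mem_Icc.mp hmem).2
    have hlogpos : (0:ℝ) ≤ Real.log p := Real.log_nonneg (by exact_mod_cast hprime.one_lt.le)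
    have hv : N / p ≤ ((Nat.factorial N)).factorization p := by
      haveI : Fact p.Prime := ⟨hprime⟩
      rw [Nat.factorization_def _ hprime,
        padicValNat_factorial (n := N) (b := Nat.log p N + 1) (Nat.lt_succ_self _)]
      have h1 : 1 ∈ Ico 1 (Nat.log p N + 1) := by
        simp only [mem_Ico]
        refine ⟨le_refl _, by
          have := Nat.log_pos hprime.one_lt hpN
          omega⟩
      calc N / p = N / p ^ 1 := by rw [pow_one]
        _ ≤ ∑ i ∈ Ico 1 (Nat.log p N + 1), N / p ^ i :=
            Finset.single_le_sum (f := fun i => N / p ^ i) (fun i _ => Nat.zero_le _) h1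
    exact mul_le_mul_of_nonneg_right (by exact_mod_cast hv) hlogpos
  have step1 : ∑ p ∈ (Icc 1 N).filter Nat.Prime, ((N / p : ℕ) : ℝ) * Real.log p
      ≤ Real.log ((Nat.factorial N)) := by
    calc ∑ p ∈ (Icc 1 N).filter Nat.Prime, ((N / p : ℕ) : ℝ) * Real.log p
        ≤ ∑ p ∈ (Icc 1 N).filter Nat.Prime, (((Nat.factorial N)).factorization p : ℝ) * Real.log p :=
          Finset.sum_le_sum hterm
      _ ≤ ∑ p ∈ ((Nat.factorial N)).primeFactors, (((Nat.factorial N)).factorization p : ℝ) * Real.log p := by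
          apply Finset.sum_le_sum_of_subset_of_nonneg hsub
          intro p hp _
          have := (Nat.prime_of_mem_primeFactors hp).one_lt.le
          have : (0:ℝ) ≤ Real.log p := Real.log_nonneg (by exact_mod_cast this)
          positivity
      _ = Real.log ((Nat.factorial N)) := hlogfac.symm
  -- step 2: log N! ≤ N log N
  have step2 : Real.log ((Nat.factorial N)) ≤ N * Real.log N := by
    calc Real.log ((Nat.factorial N)) ≤ Real.log ((N:ℕ) ^ N) := by
          apply Real.log_le_log (by positivity)
          exact_mod_cast Nat.factorial_le_pow N
      _ = N * Real.log N := by push_cast; rw [Real.log_pow]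
  -- step 3: ⌊N/p⌋ ≥ N/p - 1
  have step3 : ∀ p ∈ (Icc 1 N).filter Nat.Prime,
      ((N:ℝ) / p - 1) * Real.log p ≤ ((N / p : ℕ) : ℝ) * Real.log p := by
    intro p hp
    obtain ⟨hmem, hprime⟩ := mem_filter.mp hp
    have hppos : 0 < p := hprime.pos
    have hlogpos : (0:ℝ) ≤ Real.log p := Real.log_nonneg (by exact_mod_cast hprime.one_lt.le)
    apply mul_le_mul_of_nonneg_right _ hlogpos
    have h := Nat.div_add_mod N p
    have h2 := Nat.mod_lt N hppos
    have : (N:ℝ) < (↑(N / p) + 1) * p := by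
      have : N < p * (N / p) + p := by omega
      have := (Nat.cast_lt (α := ℝ)).mpr this
      push_cast at this ⊢
      linarith
    have hple : (0:ℝ) < p := by exact_mod_cast hppos
    rw [div_sub_one (by positivity), div_le_iff₀ hple] at *
    nlinarith [this]
  -- combine
  have key : ∑ p ∈ (Icc 1 N).filter Nat.Prime, ((N:ℝ) / p - 1) * Real.log p
      ≤ N * Real.log N := (Finset.sum_le_sum step3).trans (step1.trans step2)
  have expand : ∑ p ∈ (Icc 1 N).filter Nat.Prime, ((N:ℝ) / p - 1) * Real.log p
      = N * (∑ p ∈ (Icc 1 N).filter Nat.Prime, Real.log p / p)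
        - ∑ p ∈ (Icc 1 N).filter Nat.Prime, Real.log p := by
    rw [Finset.mul_sum, ← Finset.sum_sub_distrib]
    apply Finset.sum_congr rfl
    intro p hp
    have hppos : (0:ℝ) < p := by exact_mod_cast (mem_filter.mp hp).2.pos
    field_simp
  have hNpos : (0:ℝ) < N := by exact_mod_cast hN
  have htheta := theta_le N
  rw [expand] at key
  have : N * (∑ p ∈ (Icc 1 N).filter Nat.Prime, Real.log p / p)
      ≤ N * Real.log N + N * Real.log 4 := by linarith
  calc ∑ p ∈ (Icc 1 N).filter Nat.Prime, Real.log p / p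
      = (N * (∑ p ∈ (Icc 1 N).filter Nat.Prime, Real.log p / p)) / N := by field_simp
    _ ≤ (N * Real.log N + N * Real.log 4) / N := by
        exact div_le_div_of_nonneg_right this hNpos.le
    _ = Real.log N + Real.log 4 := by field_simp




lemma log2_pos : (0:ℝ) < Real.log 2 := Real.log_pos (by norm_num)

lemma loglog2_ge : (-1:ℝ) ≤ Real.log (Real.log 2) := by
  have h1 : Real.exp (-1) ≤ Real.log 2 := by
    rw [Real.exp_neg]
    have h2 := Real.exp_one_lt_d9
    have h3 := Real.log_two_gt_d9
    have : (0:ℝ) < Real.exp 1 := Real.exp_pos 1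
    rw [inv_le_iff_one_le_mul₀ this]
    nlinarith [Real.exp_one_gt_d9]
  calc (-1:ℝ) = Real.log (Real.exp (-1)) := (Real.log_exp _).symm
    _ ≤ Real.log (Real.log 2) := Real.log_le_log (Real.exp_pos _) h1

/-- key invariant for Mertens 2 -/
lemma M2_aux (N : ℕ) (hN : 2 ≤ N) :
    ∑ p ∈ (Icc 1 N).filter Nat.Prime, (1:ℝ)/p ≤
      (∑ p ∈ (Icc 1 N).filter Nat.Prime, Real.log p / p) / Real.log N
        + Real.log (Real.log N) - Real.log 4 / Real.log N + 3 := by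
  induction N, hN using Nat.le_induction with
  | base =>
    have : (Icc 1 2).filter Nat.Prime = {2} := by decide
    rw [this]
    simp only [sum_singleton]
    have h2 : (0:ℝ) < Real.log 2 := log2_pos
    have hl4 : Real.log (4:ℝ) = 2 * Real.log 2 := by
      rw [show (4:ℝ) = 2^2 by norm_num, Real.log_pow]; push_cast; ring
    push_cast
    rw [hl4]
    have := loglog2_ge
    have hdiv : Real.log 2 / 2 / Real.log 2 = 1/2 := by field_simp
    rw [hdiv]
    have : 2 * Real.log 2 / Real.log 2 = 2 := by field_simp
    rw [this]
    linarith
  | succ N hN ih =>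
    have hN1 : (2:ℝ) ≤ N := by exact_mod_cast hN
    have hlogN : (0:ℝ) < Real.log N := Real.log_pos (by linarith)
    have hlogN1 : (0:ℝ) < Real.log (N+1) := Real.log_pos (by linarith)
    have hmono : Real.log N ≤ Real.log (N+1) := Real.log_le_log (by linarith) (by linarith)
    -- the sets
    have hsplit : (Icc 1 (N+1)).filter Nat.Prime =
        if (N+1).Prime then insert (N+1) ((Icc 1 N).filter Nat.Prime)
        else (Icc 1 N).filter Nat.Prime := by
      have : Icc 1 (N+1) = insert (N+1) (Icc 1 N) := by
        ext m; simp only [mem_insert, mem_Icc]; omega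
      rw [this, filter_insert]
    have hnotmem : (N+1) ∉ (Icc 1 N).filter Nat.Prime := by
      simp only [mem_filter, mem_Icc]; omega
    set S := ∑ p ∈ (Icc 1 N).filter Nat.Prime, (1:ℝ)/p with hS
    set M := ∑ p ∈ (Icc 1 N).filter Nat.Prime, Real.log p / p with hM
    have hM_le : M ≤ Real.log N + Real.log 4 := M1_le N (by omega)
    have hM_nonneg : 0 ≤ M := by
      apply Finset.sum_nonneg
      intro p hp
      have hp2 : 2 ≤ p := (mem_filter.mp hp).2.two_le
      have : (0:ℝ) ≤ Real.log p := Real.log_nonneg (by exact_mod_cast hp2.trans' (by norm_num))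
      have : (0:ℝ) < p := by positivity
      positivity
    -- Δloglog ≥ (log(N+1) - log N)/log(N+1)
    have hdelta : (Real.log (N+1) - Real.log N) / Real.log (N+1)
        ≤ Real.log (Real.log (N+1)) - Real.log (Real.log N) := by
      have h := Real.log_le_sub_one_of_pos (x := Real.log N / Real.log (N+1)) (by positivity)
      rw [Real.log_div (by positivity) (by positivity)] at h
      have : Real.log N / Real.log (N+1) - 1 = -((Real.log (N+1) - Real.log N)/Real.log (N+1)) := by
        field_simp
        ring
      rw [this] at h
      linarith
    -- main inequality: (M - log 4) * d ≤ Δloglog  where d = 1/log N - 1/log(N+1)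
    set d : ℝ := 1/Real.log N - 1/Real.log (N+1) with hd_def
    have hd : (0:ℝ) ≤ d := by
      have := one_div_le_one_div_of_le hlogN hmono
      rw [hd_def]; linarith
    have hkey : M * d - Real.log 4 * d
        ≤ Real.log (Real.log (N+1)) - Real.log (Real.log N) := by
      have : (M - Real.log 4) * d ≤ Real.log (Real.log (N+1)) - Real.log (Real.log N) :=
        calc (M - Real.log 4) * d
            ≤ Real.log N * d := by
              apply mul_le_mul_of_nonneg_right _ hd
              linarith
          _ = (Real.log (N+1) - Real.log N) / Real.log (N+1) := by
              rw [hd_def]; field_simp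
          _ ≤ _ := hdelta
      nlinarith [this]
    have e3 : Real.log 4 / Real.log (N+1) = Real.log 4 / Real.log N - Real.log 4 * d := by
      rw [hd_def]; field_simp; ring
    clear_value S M d
    -- now case on primality
    by_cases hp : (N+1).Prime
    · rw [hsplit, if_pos hp, Finset.sum_insert hnotmem, Finset.sum_insert hnotmem]
      push_cast
      rw [← hM, ← hS]
      have hNpos : (0:ℝ) < (N:ℝ)+1 := by linarith
      have e1 : (Real.log (↑N+1) / (↑N+1) + M) / Real.log (↑N+1)
          = 1/(↑N+1) + M / Real.log (↑N+1) := by field_simp; try ring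
      rw [e1]
      have e2 : M / Real.log (↑N+1) = M / Real.log N - M * d := by
        rw [hd_def]; field_simp; ring
      rw [e2]
      linarith [hkey, ih, e3, hS]
    · rw [hsplit, if_neg hp]
      have e2 : M / Real.log ((N:ℝ)+1) = M / Real.log N - M * d := by
        rw [hd_def]; field_simp; ring
      push_cast
      rw [← hM, ← hS, e2]
      linarith [hkey, ih, e3]

lemma M2 (N : ℕ) (hN : 2 ≤ N) :
    ∑ p ∈ (Icc 1 N).filter Nat.Prime, (1:ℝ)/p ≤ Real.log (Real.log N) + 8 := by
  have h := M2_aux N hN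
  have hN1 : (2:ℝ) ≤ N := by exact_mod_cast hN
  have hlogN : (0:ℝ) < Real.log N := Real.log_pos (by linarith)
  have hM_le : (∑ p ∈ (Icc 1 N).filter Nat.Prime, Real.log p / p) ≤ Real.log N + Real.log 4 :=
    M1_le N (by omega)
  have h4 : (0:ℝ) ≤ Real.log 4 := Real.log_nonneg (by norm_num)
  have : (∑ p ∈ (Icc 1 N).filter Nat.Prime, Real.log p / p) / Real.log N
      ≤ 1 + Real.log 4 / Real.log N := by
    rw [div_le_iff₀ hlogN]
    field_simp at hM_le ⊢
    linarith
  linarith [h, this]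




/-- pairs (p,k) with p prime, k ≥ 1, p^k ≤ y -/
def PP (y : ℕ) : Finset (ℕ × ℕ) :=
  ((Icc 1 y) ×ˢ (Icc 1 y)).filter (fun q => q.1.Prime ∧ q.1 ^ q.2 ≤ y)

noncomputable def Psi (y : ℕ) : ℝ := ∑ q ∈ PP y, (q.2 : ℝ) * Real.log q.1

lemma mem_PP {y : ℕ} {q : ℕ × ℕ} :
    q ∈ PP y ↔ (1 ≤ q.1 ∧ q.1 ≤ y) ∧ (1 ≤ q.2 ∧ q.2 ≤ y) ∧ q.1.Prime ∧ q.1 ^ q.2 ≤ y := by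
  simp only [PP, mem_filter, mem_product, mem_Icc]
  tauto

lemma Psi_nonneg (y : ℕ) : 0 ≤ Psi y := by
  apply Finset.sum_nonneg
  intro q hq
  have h := (mem_PP.mp hq)
  have h1 : (1:ℝ) ≤ q.1 := by exact_mod_cast h.2.2.1.one_lt.le
  have := Real.log_nonneg h1
  positivity

lemma Psi_le (y : ℕ) : Psi y ≤ 40 * y := by
  rcases Nat.eq_zero_or_pos y with rfl | hy
  · simp [Psi, PP]
  have hy1 : (1:ℝ) ≤ y := by exact_mod_cast hy
  have hypos : (0:ℝ) < y := by linarith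
  rw [Psi, ← Finset.sum_filter_add_sum_filter_not (PP y) (fun q => q.2 = 1)]
  have part1 : ∑ q ∈ (PP y).filter (fun q => q.2 = 1), (q.2 : ℝ) * Real.log q.1
      ≤ y * Real.log 4 := by
    have hsub : (PP y).filter (fun q => q.2 = 1) ⊆
        ((Icc 1 y).filter Nat.Prime).image (fun p => (p, (1:ℕ))) := by
      intro q hq
      obtain ⟨hq1, hq2⟩ := mem_filter.mp hq
      obtain ⟨⟨ha, hb⟩, _, hp, hpow⟩ := mem_PP.mp hq1
      apply Finset.mem_image.mpr
      refine ⟨q.1, ?_, ?_⟩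
      · exact mem_filter.mpr ⟨mem_Icc.mpr ⟨ha, hb⟩, hp⟩
      · ext <;> simp [hq2.symm]
    calc ∑ q ∈ (PP y).filter (fun q => q.2 = 1), (q.2 : ℝ) * Real.log q.1
        ≤ ∑ q ∈ ((Icc 1 y).filter Nat.Prime).image (fun p => (p, (1:ℕ))), (q.2 : ℝ) * Real.log q.1 := by
          apply Finset.sum_le_sum_of_subset_of_nonneg hsub
          intro q hq _
          obtain ⟨p, hp, rfl⟩ := Finset.mem_image.mp hq
          have : (1:ℝ) ≤ p := by exact_mod_cast (mem_filter.mp hp).2.one_lt.le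
          have := Real.log_nonneg this
          positivity
      _ = ∑ p ∈ (Icc 1 y).filter Nat.Prime, Real.log p := by
          rw [Finset.sum_image (fun a _ b _ h => by simpa using congrArg Prod.fst h)]
          simp
      _ ≤ y * Real.log 4 := theta_le y
  have part2 : ∑ q ∈ (PP y).filter (fun q => ¬ q.2 = 1), (q.2 : ℝ) * Real.log q.1
      ≤ 32 * y := by
    -- each term is ≤ log y ; the set injects into Icc 1 (sqrt y) ×ˢ Icc 1 (Nat.log 2 y)
    have hterm : ∀ q ∈ (PP y).filter (fun q => ¬ q.2 = 1), (q.2 : ℝ) * Real.log q.1 ≤ Real.log y := by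
      intro q hq
      obtain ⟨hq1, _⟩ := mem_filter.mp hq
      obtain ⟨⟨ha, hb⟩, ⟨hk1, _⟩, hp, hpow⟩ := mem_PP.mp hq1
      have : (q.2 : ℝ) * Real.log q.1 = Real.log ((q.1 ^ q.2 : ℕ) : ℝ) := by
        push_cast; rw [Real.log_pow]
      rw [this]
      apply Real.log_le_log (by positivity) (by exact_mod_cast hpow)
    have hsub : (PP y).filter (fun q => ¬ q.2 = 1) ⊆ (Icc 1 (Nat.sqrt y)) ×ˢ (Icc 1 (Nat.log 2 y)) := by
      intro q hq
      obtain ⟨hq1, hk⟩ := mem_filter.mp hq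
      obtain ⟨⟨ha, hb⟩, ⟨hk1, _⟩, hp, hpow⟩ := mem_PP.mp hq1
      have hk2 : 2 ≤ q.2 := by omega
      apply Finset.mem_product.mpr
      constructor
      · apply mem_Icc.mpr
        refine ⟨ha, Nat.le_sqrt.mpr ?_⟩
        calc q.1 * q.1 = q.1 ^ 2 := (sq q.1).symm
          _ ≤ q.1 ^ q.2 := Nat.pow_le_pow_right hp.pos hk2
          _ ≤ y := hpow
      · apply mem_Icc.mpr
        refine ⟨hk1, Nat.le_log_of_pow_le (by norm_num) ?_⟩
        calc 2 ^ q.2 ≤ q.1 ^ q.2 := Nat.pow_le_pow_left hp.two_le _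
          _ ≤ y := hpow
    have hcard : ((PP y).filter (fun q => ¬ q.2 = 1)).card ≤ Nat.sqrt y * Nat.log 2 y := by
      calc ((PP y).filter (fun q => ¬ q.2 = 1)).card
          ≤ ((Icc 1 (Nat.sqrt y)) ×ˢ (Icc 1 (Nat.log 2 y))).card := Finset.card_le_card hsub
        _ = Nat.sqrt y * Nat.log 2 y := by rw [Finset.card_product]; simp
    have hlogy : (0:ℝ) ≤ Real.log y := Real.log_nonneg hy1
    calc ∑ q ∈ (PP y).filter (fun q => ¬ q.2 = 1), (q.2 : ℝ) * Real.log q.1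
        ≤ ∑ _q ∈ (PP y).filter (fun q => ¬ q.2 = 1), Real.log y := Finset.sum_le_sum hterm
      _ = ((PP y).filter (fun q => ¬ q.2 = 1)).card * Real.log y := by
          rw [Finset.sum_const, nsmul_eq_mul]
      _ ≤ (Nat.sqrt y * Nat.log 2 y : ℕ) * Real.log y := by
          apply mul_le_mul_of_nonneg_right _ hlogy
          exact_mod_cast hcard
      _ ≤ 32 * y := by
          set s := Real.sqrt y with hs
          have hsnn : (0:ℝ) ≤ s := Real.sqrt_nonneg _
          have hss : s * s = y := Real.mul_self_sqrt (le_of_lt hypos)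
          have h1 : (Nat.sqrt y : ℝ) ≤ s := by
            rw [hs, show ((y:ℝ)) = ((Nat.sqrt y : ℝ))^2 + ((y:ℝ) - (Nat.sqrt y:ℝ)^2) by ring]
            have hle : ((Nat.sqrt y : ℝ))^2 ≤ (y:ℝ) := by
              have h := Nat.sqrt_le' y
              exact_mod_cast h
            calc (Nat.sqrt y : ℝ) = Real.sqrt ((Nat.sqrt y:ℝ)^2) := by
                  rw [Real.sqrt_sq (by positivity)]
              _ ≤ Real.sqrt ((Nat.sqrt y:ℝ)^2 + ((y:ℝ) - (Nat.sqrt y:ℝ)^2)) := by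
                  apply Real.sqrt_le_sqrt; nlinarith [hle]
          have hlog2 : (0.6931471803:ℝ) < Real.log 2 := Real.log_two_gt_d9
          have h2 : (Nat.log 2 y : ℝ) ≤ 2 * Real.log y := by
            have hpw : (2:ℕ) ^ (Nat.log 2 y) ≤ y := Nat.pow_log_le_self 2 (by omega)
            have : (Nat.log 2 y : ℝ) * Real.log 2 ≤ Real.log y := by
              calc (Nat.log 2 y : ℝ) * Real.log 2 = Real.log (((2:ℕ) ^ (Nat.log 2 y) : ℕ) : ℝ) := by
                    push_cast; rw [Real.log_pow]
                _ ≤ Real.log y := Real.log_le_log (by positivity) (by exact_mod_cast hpw)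
            nlinarith [this, Nat.cast_nonneg (Nat.log 2 y) |>.trans_eq (rfl : ((Nat.log 2 y : ℝ)) = _) ]
          have h3 : (Real.log y)^2 ≤ 16 * s := by
            have hq : Real.log y = 4 * Real.log ((y:ℝ) ^ ((4:ℝ)⁻¹)) := by
              rw [Real.log_rpow hypos]; ring
            have hquarter : Real.log ((y:ℝ) ^ ((4:ℝ)⁻¹)) ≤ (y:ℝ) ^ ((4:ℝ)⁻¹) := by
              have := Real.log_le_sub_one_of_pos (x := (y:ℝ) ^ ((4:ℝ)⁻¹)) (by positivity)
              linarith
            have hqq : ((y:ℝ) ^ ((4:ℝ)⁻¹)) * ((y:ℝ) ^ ((4:ℝ)⁻¹)) = s := by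
              rw [hs, Real.sqrt_eq_rpow, ← Real.rpow_add hypos]
              norm_num
            have hqnn : (0:ℝ) ≤ (y:ℝ) ^ ((4:ℝ)⁻¹) := by positivity
            nlinarith [hq, hquarter, hqq, hqnn]
          have hBnn : (0:ℝ) ≤ (Nat.log 2 y : ℝ) := Nat.cast_nonneg _
          have step : ((Nat.sqrt y : ℝ)) * (Nat.log 2 y : ℝ) ≤ s * (2 * Real.log y) := by
            apply mul_le_mul h1 h2 hBnn hsnn
          have : ((Nat.sqrt y * Nat.log 2 y : ℕ) : ℝ) * Real.log y ≤ (s * (2 * Real.log y)) * Real.log y := by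
            push_cast
            exact mul_le_mul_of_nonneg_right step hlogy
          refine this.trans ?_
          nlinarith [h3, hsnn, hss, hlogy]
  have hlog4 : Real.log 4 ≤ 8 := by
    have := Real.log_le_sub_one_of_pos (x := (4:ℝ)) (by norm_num)
    linarith
  have : (y:ℝ) * Real.log 4 ≤ (y:ℝ) * 8 := by
    apply mul_le_mul_of_nonneg_left hlog4 (by positivity)
  linarith [part1, part2]



lemma tele (x : ℕ) (hx : 1 ≤ x) :
    ∑ m ∈ Icc 2 x, (1:ℝ)/((m:ℝ)*((m:ℝ)-1)) = 1 - 1/(x:ℝ) := by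
  induction x, hx using Nat.le_induction with
  | base => simp
  | succ x hx ih =>
    have hins : Icc 2 (x+1) = insert (x+1) (Icc 2 x) := by
      ext m; simp only [mem_insert, mem_Icc]; omega
    have hnot : (x+1) ∉ Icc 2 x := by simp
    rw [hins, Finset.sum_insert hnot, ih]
    have hx' : (1:ℝ) ≤ (x:ℝ) := by exact_mod_cast hx
    push_cast
    have h1 : (x:ℝ) > 0 := by linarith
    have h2 : (x:ℝ) + 1 > 0 := by linarith
    field_simp
    ring_nf
    rw [mul_inv_cancel₀ (ne_of_gt h1)]
    ring

set_option maxHeartbeats 1000000 in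
theorem T_le (C : ℝ) (hC : 1 ≤ C) (a : ℕ → ℝ)
    (ha : ∀ p : ℕ, p.Prime → a p ∈ Set.Icc 0 C) (x : ℕ) (hx : 1 ≤ x) :
    ∑ n ∈ Icc 1 x, (∏ p ∈ n.primeFactors, a p) / n ≤
      Real.exp (C + ∑ p ∈ (Icc 1 x).filter Nat.Prime, a p / p) := by
  classical
  set s := (Icc 1 x).filter Nat.Prime with hs
  set w : ℕ → ℕ → ℝ := fun p k => if k = 0 then 1 else a p / p^k with hw
  have hprime : ∀ p ∈ s, p.Prime := fun p hp => (mem_filter.mp hp).2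
  have hwnn : ∀ p ∈ s, ∀ k, 0 ≤ w p k := by
    intro p hp k
    rcases eq_or_ne k 0 with rfl | hk
    · simp [hw]
    · have h0 := (ha p (hprime p hp)).1
      have : (0:ℝ) < p := by exact_mod_cast (hprime p hp).pos
      simp only [hw, if_neg hk]
      positivity
  -- the pi-expansion
  have h_expand := Finset.prod_sum s (fun _ => range (x+1)) w
  -- the injection from Icc 1 x
  set g : ℕ → (∀ p ∈ s, ℕ) := fun n => fun p _ => n.factorization p with hg
  have hpf_sub : ∀ n ∈ Icc 1 x, n.primeFactors ⊆ s := by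
    intro n hn p hp
    obtain ⟨h1, h2⟩ := mem_Icc.mp hn
    have hple : p ≤ n := Nat.le_of_dvd (by omega) (Nat.dvd_of_mem_primeFactors hp)
    exact mem_filter.mpr ⟨mem_Icc.mpr ⟨(Nat.prime_of_mem_primeFactors hp).one_lt.le.trans'
      (by norm_num), hple.trans h2⟩, Nat.prime_of_mem_primeFactors hp⟩
  have hval : ∀ n ∈ Icc 1 x,
      (∏ p ∈ n.primeFactors, a p) / n = ∏ q ∈ s.attach, w q.1 (g n q.1 q.2) := by
    intro n hn
    obtain ⟨h1, h2⟩ := mem_Icc.mp hn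
    have hn0 : n ≠ 0 := by omega
    have e1 : ∏ q ∈ s.attach, w q.1 (g n q.1 q.2) = ∏ p ∈ s, w p (n.factorization p) :=
      Finset.prod_attach s (fun p => w p (n.factorization p))
    have e2 : ∏ p ∈ s, w p (n.factorization p) = ∏ p ∈ n.primeFactors, w p (n.factorization p) := by
      apply (Finset.prod_subset (hpf_sub n hn) _).symm
      intro p hp hnp
      have : n.factorization p = 0 := by
        rw [← Finsupp.notMem_support_iff, Nat.support_factorization]
        exact hnp
      simp [hw, this]
    have e3 : ∏ p ∈ n.primeFactors, w p (n.factorization p)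
        = (∏ p ∈ n.primeFactors, a p) / (∏ p ∈ n.primeFactors, (p:ℝ) ^ n.factorization p) := by
      rw [← Finset.prod_div_distrib]
      apply Finset.prod_congr rfl
      intro p hp
      have : n.factorization p ≠ 0 := by
        rw [← Nat.support_factorization] at hp
        exact Finsupp.mem_support_iff.mp hp
      simp [hw, this]
    have e4 : (∏ p ∈ n.primeFactors, (p:ℝ) ^ n.factorization p) = (n:ℝ) := by
      rw [show (∏ p ∈ n.primeFactors, (p:ℝ) ^ n.factorization p)
          = ((∏ p ∈ n.primeFactors, p ^ n.factorization p : ℕ) : ℝ) by push_cast; rfl]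
      congr 1
      conv_rhs => rw [← Nat.factorization_prod_pow_eq_self hn0]
      rw [Finsupp.prod, Nat.support_factorization]
    rw [e1, e2, e3, e4]
  have hinj : ∀ n ∈ Icc 1 x, ∀ m ∈ Icc 1 x, g n = g m → n = m := by
    intro n hn m hm hgnm
    have hn0 : n ≠ 0 := by have := (mem_Icc.mp hn).1; omega
    have hm0 : m ≠ 0 := by have := (mem_Icc.mp hm).1; omega
    apply Nat.factorization_inj (by simpa using hn0) (by simpa using hm0)
    ext p
    by_cases hp : p ∈ s
    · simp only [hg, funext_iff] at hgnm
      exact hgnm p hp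
    · have h1 : p ∉ n.primeFactors := fun h => hp (hpf_sub n hn h)
      have h2 : p ∉ m.primeFactors := fun h => hp (hpf_sub m hm h)
      rw [← Nat.support_factorization] at h1 h2
      rw [Finsupp.notMem_support_iff.mp h1, Finsupp.notMem_support_iff.mp h2]
  -- image is inside the pi set
  have himg : (Icc 1 x).image g ⊆ s.pi (fun _ => range (x+1)) := by
    intro φ hφ
    obtain ⟨n, hn, rfl⟩ := Finset.mem_image.mp hφ
    rw [Finset.mem_pi]
    intro p hp
    rw [Finset.mem_range]
    have hn0 : n ≠ 0 := by have := (mem_Icc.mp hn).1; omega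
    have := Nat.factorization_lt (n := n) p hn0
    have := (mem_Icc.mp hn).2
    simp only [hg]
    omega
  -- put it together
  have main : ∑ n ∈ Icc 1 x, (∏ p ∈ n.primeFactors, a p) / n
      ≤ ∏ p ∈ s, ∑ k ∈ range (x+1), w p k := by
    rw [h_expand]
    calc ∑ n ∈ Icc 1 x, (∏ p ∈ n.primeFactors, a p) / n
        = ∑ n ∈ Icc 1 x, ∏ q ∈ s.attach, w q.1 (g n q.1 q.2) := Finset.sum_congr rfl hval
      _ = ∑ φ ∈ (Icc 1 x).image g, ∏ q ∈ s.attach, w q.1 (φ q.1 q.2) :=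
          (Finset.sum_image (f := fun φ : ∀ p ∈ s, ℕ => ∏ q ∈ s.attach, w q.1 (φ q.1 q.2))
            (g := g) hinj).symm
      _ ≤ ∑ φ ∈ s.pi (fun _ => range (x+1)), ∏ q ∈ s.attach, w q.1 (φ q.1 q.2) := by
          apply Finset.sum_le_sum_of_subset_of_nonneg himg
          intro φ _ _
          apply Finset.prod_nonneg
          intro q _
          exact hwnn q.1 q.2 _
  -- per-prime bound
  have hper : ∀ p ∈ s, ∑ k ∈ range (x+1), w p k ≤ Real.exp (a p / ((p:ℝ) - 1)) := by
    intro p hp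
    have hp2 : 2 ≤ p := (hprime p hp).two_le
    have hp2' : (2:ℝ) ≤ p := by exact_mod_cast hp2
    have hppos : (0:ℝ) < p := by linarith
    have ha0 := (ha p (hprime p hp)).1
    have hins : range (x+1) = insert 0 (Ioc 0 x) := by
      ext k; simp only [mem_range, mem_insert, mem_Ioc]; omega
    have hnot : (0:ℕ) ∉ Ioc 0 x := by simp
    rw [hins, Finset.sum_insert hnot]
    have hw0 : w p 0 = 1 := by simp [hw]
    have hrest : ∑ k ∈ Ioc 0 x, w p k ≤ a p / ((p:ℝ) - 1) := by
      have hterm : ∀ k ∈ Ioc 0 x, w p k = a p * (1/(p:ℝ))^k := by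
        intro k hk
        have hk0 : k ≠ 0 := by have := (mem_Ioc.mp hk).1; omega
        simp only [hw, if_neg hk0]
        rw [div_pow, one_pow]
        ring
      rw [Finset.sum_congr rfl hterm, ← Finset.mul_sum]
      have hr : (0:ℝ) ≤ 1/(p:ℝ) := by positivity
      have hrlt : 1/(p:ℝ) < 1 := by
        rw [div_lt_one hppos]; linarith
      have hgeo : ∑ k ∈ Ioc 0 x, (1/(p:ℝ))^k ≤ 1/((p:ℝ)-1) := by
        have hpne : (p:ℝ) ≠ 0 := by linarith
        have hpm1 : (0:ℝ) < (p:ℝ) - 1 := by linarith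
        have hpm1' : (p:ℝ) - 1 ≠ 0 := ne_of_gt hpm1
        have h1mr : (0:ℝ) < 1 - 1/(p:ℝ) := by linarith
        have hsum0 : ∑ k ∈ range (x+1), (1/(p:ℝ))^k = 1 + ∑ k ∈ Ioc 0 x, (1/(p:ℝ))^k := by
          rw [hins, Finset.sum_insert hnot, pow_zero]
        have hgs : ∑ k ∈ range (x+1), (1/(p:ℝ))^k ≤ 1/(1 - 1/(p:ℝ)) := by
          rw [geom_sum_eq (by linarith : (1:ℝ)/(p:ℝ) ≠ 1)]
          have heq2 : ((1/(p:ℝ))^(x+1) - 1)/((1/(p:ℝ)) - 1)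
              = (1 - (1/(p:ℝ))^(x+1))/(1 - 1/(p:ℝ)) := by
            rw [div_eq_div_iff (by intro h; nlinarith : (1:ℝ)/(p:ℝ) - 1 ≠ 0)
              (by intro h; nlinarith : (1:ℝ) - 1/(p:ℝ) ≠ 0)]
            ring
          rw [heq2]
          have hpow : (0:ℝ) ≤ (1/(p:ℝ))^(x+1) := by positivity
          apply div_le_div_of_nonneg_right (by linarith) h1mr.le
        have heq : 1/(1 - 1/(p:ℝ)) = (p:ℝ)/((p:ℝ)-1) := by
          rw [div_eq_div_iff (ne_of_gt h1mr) hpm1']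
          field_simp
        have hfin : (p:ℝ)/((p:ℝ)-1) - 1 = 1/((p:ℝ)-1) := by
          rw [eq_div_iff hpm1']
          field_simp
          ring
        linarith [hgs, hsum0]
      calc a p * ∑ k ∈ Ioc 0 x, (1/(p:ℝ))^k ≤ a p * (1/((p:ℝ)-1)) :=
            mul_le_mul_of_nonneg_left hgeo ha0
        _ = a p / ((p:ℝ)-1) := by ring
    calc w p 0 + ∑ k ∈ Ioc 0 x, w p k ≤ 1 + a p / ((p:ℝ)-1) := by
          rw [hw0]; linarith
      _ ≤ Real.exp (a p / ((p:ℝ)-1)) := by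
          have := Real.add_one_le_exp (a p / ((p:ℝ)-1))
          linarith
  -- sum of a_p/(p-1) ≤ C + sum a_p / p
  have hsum : ∑ p ∈ s, a p / ((p:ℝ)-1) ≤ C + ∑ p ∈ s, a p / p := by
    have h1 : ∀ p ∈ s, a p / ((p:ℝ)-1) - a p / p ≤ C * (1/((p:ℝ)*((p:ℝ)-1))) := by
      intro p hp
      have hp2' : (2:ℝ) ≤ p := by exact_mod_cast (hprime p hp).two_le
      have haub := (ha p (hprime p hp)).2
      have ha0 := (ha p (hprime p hp)).1
      have hpne : (p:ℝ) ≠ 0 := by linarith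
      have hpm1' : (p:ℝ) - 1 ≠ 0 := by intro h; nlinarith [h]
      have e : a p / ((p:ℝ)-1) - a p / p = a p * (1/((p:ℝ)*((p:ℝ)-1))) := by
        field_simp
        ring
      rw [e]
      apply mul_le_mul_of_nonneg_right haub
      apply div_nonneg zero_le_one (by nlinarith)
    have h2 : ∑ p ∈ s, C * (1/((p:ℝ)*((p:ℝ)-1))) ≤ C * 1 := by
      rw [← Finset.mul_sum]
      apply mul_le_mul_of_nonneg_left _ (by linarith)
      have hsub2 : s ⊆ Icc 2 x := by
        intro p hp
        have := (hprime p hp).two_le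
        have := (mem_Icc.mp (mem_filter.mp hp).1).2
        exact mem_Icc.mpr ⟨by omega, by omega⟩
      calc ∑ p ∈ s, 1/((p:ℝ)*((p:ℝ)-1))
          ≤ ∑ m ∈ Icc 2 x, 1/((m:ℝ)*((m:ℝ)-1)) := by
            apply Finset.sum_le_sum_of_subset_of_nonneg hsub2
            intro m hm _
            have : (2:ℝ) ≤ m := by exact_mod_cast (mem_Icc.mp hm).1
            apply div_nonneg zero_le_one (by nlinarith)
        _ = 1 - 1/(x:ℝ) := tele x hx
        _ ≤ 1 := by
            have : (0:ℝ) < x := by exact_mod_cast hx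
            have : 0 ≤ 1/(x:ℝ) := by positivity
            linarith
    calc ∑ p ∈ s, a p / ((p:ℝ)-1)
        = ∑ p ∈ s, (a p / ((p:ℝ)-1) - a p / p) + ∑ p ∈ s, a p / p := by
          rw [← Finset.sum_add_distrib]; apply Finset.sum_congr rfl; intros; ring
      _ ≤ ∑ p ∈ s, C * (1/((p:ℝ)*((p:ℝ)-1))) + ∑ p ∈ s, a p / p := by
          gcongr with p hp
          exact h1 p hp
      _ ≤ C + ∑ p ∈ s, a p / p := by linarith [h2]
  calc ∑ n ∈ Icc 1 x, (∏ p ∈ n.primeFactors, a p) / n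
      ≤ ∏ p ∈ s, ∑ k ∈ range (x+1), w p k := main
    _ ≤ ∏ p ∈ s, Real.exp (a p / ((p:ℝ)-1)) := by
        apply Finset.prod_le_prod _ hper
        intro p hp
        apply Finset.sum_nonneg
        intro k _
        exact hwnn p hp k
    _ = Real.exp (∑ p ∈ s, a p / ((p:ℝ)-1)) := (Real.exp_sum s _).symm
    _ ≤ Real.exp (C + ∑ p ∈ s, a p / p) := Real.exp_le_exp.mpr hsum



section

variable (C : ℝ) (a : ℕ → ℝ)

/-- log-decomposition of `f n * log n` -/
lemma flog_decomp (n : ℕ) (hn : 1 ≤ n) :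
    (∏ p ∈ n.primeFactors, a p) * Real.log n
      = ∑ p ∈ n.primeFactors, ((n.factorization p : ℝ) * Real.log p) *
          (a p * ∏ q ∈ (n / p ^ n.factorization p).primeFactors, a q) := by
  have hn0 : n ≠ 0 := by omega
  have hlog : Real.log n = ∑ p ∈ n.primeFactors, (n.factorization p : ℝ) * Real.log p := by
    conv_lhs => rw [← Nat.factorization_prod_pow_eq_self hn0]
    rw [Finsupp.prod, Nat.support_factorization]
    push_cast
    rw [Real.log_prod]
    · exact Finset.sum_congr rfl fun p hp => by rw [Real.log_pow]
    · intro p hp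
      have := (Nat.prime_of_mem_primeFactors hp).pos
      positivity
  rw [hlog, Finset.mul_sum]
  apply Finset.sum_congr rfl
  intro p hp
  have hprime : p.Prime := Nat.prime_of_mem_primeFactors hp
  have hfact : (∏ q ∈ n.primeFactors, a q)
      = a p * ∏ q ∈ (n / p ^ n.factorization p).primeFactors, a q := by
    have hm0 : n / p ^ n.factorization p ≠ 0 := (Nat.ordCompl_pos p hn0).ne'
    have hpk0 : p ^ n.factorization p ≠ 0 := pow_ne_zero _ hprime.pos.ne'
    have hv : n.factorization p ≠ 0 := by
      rw [← Nat.support_factorization] at hp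
      exact Finsupp.mem_support_iff.mp hp
    have hpf : n.primeFactors = insert p ((n / p ^ n.factorization p).primeFactors) := by
      conv_lhs => rw [← Nat.ordProj_mul_ordCompl_eq_self n p]
      rw [Nat.primeFactors_mul hpk0 hm0, Nat.primeFactors_pow p hv, hprime.primeFactors,
        ← Finset.insert_eq]
    have hnotmem : p ∉ (n / p ^ n.factorization p).primeFactors := by
      intro hmem
      exact Nat.not_dvd_ordCompl hprime hn0 (Nat.dvd_of_mem_primeFactors hmem)
    rw [hpf, Finset.prod_insert hnotmem]
  rw [hfact]
  ring

theorem swap_le (hC : 1 ≤ C)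
    (ha : ∀ p : ℕ, p.Prime → a p ∈ Set.Icc 0 C) (x : ℕ) (hx : 1 ≤ x) :
    ∑ n ∈ Icc 1 x, (∏ p ∈ n.primeFactors, a p) * Real.log n
      ≤ 40 * C * x * ∑ m ∈ Icc 1 x, (∏ p ∈ m.primeFactors, a p) / m := by
  classical
  have fnonneg : ∀ n : ℕ, 0 ≤ ∏ p ∈ n.primeFactors, a p := by
    intro n
    apply Finset.prod_nonneg
    intro p hp
    exact (ha p (Nat.prime_of_mem_primeFactors hp)).1
  set G : (Σ _ : ℕ, ℕ × ℕ) → ℝ :=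
    fun τ => ((τ.2.2 : ℝ) * Real.log τ.2.1) * (a τ.2.1 * ∏ q ∈ τ.1.primeFactors, a q) with hG
  set i : (Σ _ : ℕ, ℕ) → (Σ _ : ℕ, ℕ × ℕ) :=
    fun σ => ⟨σ.1 / σ.2 ^ (σ.1.factorization σ.2), (σ.2, σ.1.factorization σ.2)⟩ with hi
  set A : Finset (Σ _ : ℕ, ℕ) := (Icc 1 x).sigma (fun n => n.primeFactors) with hA
  set B : Finset (Σ _ : ℕ, ℕ × ℕ) := (Icc 1 x).sigma (fun m => PP (x / m)) with hB
  -- properties of A-members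
  have hmemA : ∀ σ ∈ A, 1 ≤ σ.1 ∧ σ.1 ≤ x ∧ σ.2 ∈ σ.1.primeFactors := by
    intro σ hσ
    have := Finset.mem_sigma.mp hσ
    exact ⟨(mem_Icc.mp this.1).1, (mem_Icc.mp this.1).2, this.2⟩
  have hGnonnegB : ∀ τ ∈ B, 0 ≤ G τ := by
    intro τ hτ
    have h := Finset.mem_sigma.mp hτ
    have hp := (mem_PP.mp h.2).2.2.1
    have h1 : (1:ℝ) ≤ τ.2.1 := by exact_mod_cast hp.one_lt.le
    have := Real.log_nonneg h1
    have := (ha _ hp).1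
    have := fnonneg τ.1
    positivity
  have himage : A.image i ⊆ B := by
    intro τ hτ
    obtain ⟨σ, hσ, rfl⟩ := Finset.mem_image.mp hτ
    obtain ⟨h1, h2, h3⟩ := hmemA σ hσ
    have hn0 : σ.1 ≠ 0 := by omega
    have hprime : σ.2.Prime := Nat.prime_of_mem_primeFactors h3
    have hv : σ.1.factorization σ.2 ≠ 0 := by
      rw [← Nat.support_factorization] at h3
      exact Finsupp.mem_support_iff.mp h3
    set k := σ.1.factorization σ.2 with hk
    set m := σ.1 / σ.2 ^ k with hm
    have hmk : σ.2 ^ k * m = σ.1 := Nat.ordProj_mul_ordCompl_eq_self σ.1 σ.2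
    have hmpos : 0 < m := Nat.ordCompl_pos σ.2 hn0
    have hmlex : m ≤ x := le_trans (Nat.div_le_self _ _) h2
    have hpkdiv : σ.2 ^ k ≤ x / m := by
      rw [Nat.le_div_iff_mul_le hmpos]
      exact le_of_eq_of_le hmk h2
    have hple : σ.2 ≤ x / m := le_trans (Nat.le_self_pow hv σ.2) hpkdiv
    have hkle : k ≤ x / m := by
      have h2k : k < 2 ^ k := Nat.lt_two_pow_self
      have h2k2 : (2:ℕ) ^ k ≤ σ.2 ^ k := Nat.pow_le_pow_left hprime.two_le k
      exact le_of_lt (lt_of_lt_of_le (lt_of_lt_of_le h2k h2k2) hpkdiv)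
    apply Finset.mem_sigma.mpr
    constructor
    · exact mem_Icc.mpr ⟨hmpos, hmlex⟩
    · apply mem_PP.mpr
      refine ⟨⟨hprime.one_lt.le, hple⟩, ⟨Nat.one_le_iff_ne_zero.mpr hv, hkle⟩, hprime, hpkdiv⟩
  have hinj : ∀ σ ∈ A, ∀ τ ∈ A, i σ = i τ → σ = τ := by
    intro σ hσ τ hτ h
    obtain ⟨n, p⟩ := σ
    obtain ⟨n', p'⟩ := τ
    simp only [hi] at h
    rw [Sigma.ext_iff] at h
    obtain ⟨hmeq, hrest⟩ := h
    have hpair : (p, n.factorization p) = (p', n'.factorization p') := eq_of_heq hrest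
    have hpeq : p = p' := congrArg Prod.fst hpair
    have hkeq : n.factorization p = n'.factorization p' := congrArg Prod.snd hpair
    simp only at hmeq
    subst hpeq
    have hnn' : n = n' := by
      conv_lhs => rw [← Nat.ordProj_mul_ordCompl_eq_self n p]
      conv_rhs => rw [← Nat.ordProj_mul_ordCompl_eq_self n' p]
      rw [hmeq, hkeq]
    subst hnn'
    rfl
  -- chain of steps
  have step1 : ∑ n ∈ Icc 1 x, (∏ p ∈ n.primeFactors, a p) * Real.log n
      = ∑ σ ∈ A, G (i σ) := by
    rw [hA, ← Finset.sum_sigma' (Icc 1 x) (fun n => n.primeFactors)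
      (fun n p => G (i ⟨n, p⟩))]
    apply Finset.sum_congr rfl
    intro n hn
    exact flog_decomp a n (mem_Icc.mp hn).1
  have step2 : ∑ σ ∈ A, G (i σ) = ∑ τ ∈ A.image i, G τ :=
    (Finset.sum_image (f := G) (g := i) hinj).symm
  have step3 : ∑ τ ∈ A.image i, G τ ≤ ∑ τ ∈ B, G τ :=
    Finset.sum_le_sum_of_subset_of_nonneg himage (fun τ hτ _ => hGnonnegB τ hτ)
  have step4 : ∑ τ ∈ B, G τ
      = ∑ m ∈ Icc 1 x, ∑ q ∈ PP (x / m),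
          ((q.2 : ℝ) * Real.log q.1) * (a q.1 * ∏ r ∈ m.primeFactors, a r) := by
    rw [hB, ← Finset.sum_sigma' (Icc 1 x) (fun m => PP (x / m))
      (fun m q => ((q.2 : ℝ) * Real.log q.1) * (a q.1 * ∏ r ∈ m.primeFactors, a r))]
  have step5 : ∀ m ∈ Icc 1 x,
      ∑ q ∈ PP (x / m), ((q.2 : ℝ) * Real.log q.1) * (a q.1 * ∏ r ∈ m.primeFactors, a r)
      ≤ C * (∏ r ∈ m.primeFactors, a r) * Psi (x / m) := by
    intro m hm
    rw [Psi, Finset.mul_sum]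
    apply Finset.sum_le_sum
    intro q hq
    have hp := (mem_PP.mp hq).2.2.1
    have h1 : (1:ℝ) ≤ q.1 := by exact_mod_cast hp.one_lt.le
    have hlognn := Real.log_nonneg h1
    have haub := (ha _ hp).2
    have ha0 := (ha _ hp).1
    have hfm := fnonneg m
    have hknn : (0:ℝ) ≤ (q.2 : ℝ) := Nat.cast_nonneg _
    calc ((q.2 : ℝ) * Real.log q.1) * (a q.1 * ∏ r ∈ m.primeFactors, a r)
        ≤ ((q.2 : ℝ) * Real.log q.1) * (C * ∏ r ∈ m.primeFactors, a r) := by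
          apply mul_le_mul_of_nonneg_left _ (by positivity)
          exact mul_le_mul_of_nonneg_right haub hfm
      _ = C * (∏ r ∈ m.primeFactors, a r) * ((q.2 : ℝ) * Real.log q.1) := by ring
  have step6 : ∀ m ∈ Icc 1 x,
      C * (∏ r ∈ m.primeFactors, a r) * Psi (x / m)
      ≤ 40 * C * x * ((∏ r ∈ m.primeFactors, a r) / m) := by
    intro m hm
    have hm1 : 1 ≤ m := (mem_Icc.mp hm).1
    have hmpos : (0:ℝ) < m := by exact_mod_cast hm1
    have hCf : 0 ≤ C * (∏ r ∈ m.primeFactors, a r) :=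
      mul_nonneg (by linarith) (fnonneg m)
    have h40 : Psi (x / m) ≤ 40 * ((x / m : ℕ) : ℝ) := Psi_le (x / m)
    have hcast : ((x / m : ℕ) : ℝ) ≤ (x:ℝ) / m := Nat.cast_div_le
    calc C * (∏ r ∈ m.primeFactors, a r) * Psi (x / m)
        ≤ C * (∏ r ∈ m.primeFactors, a r) * (40 * ((x / m : ℕ) : ℝ)) :=
          mul_le_mul_of_nonneg_left h40 hCf
      _ ≤ C * (∏ r ∈ m.primeFactors, a r) * (40 * ((x:ℝ) / m)) := by
          apply mul_le_mul_of_nonneg_left _ hCf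
          linarith
      _ = 40 * C * x * ((∏ r ∈ m.primeFactors, a r) / m) := by
          field_simp
  calc ∑ n ∈ Icc 1 x, (∏ p ∈ n.primeFactors, a p) * Real.log n
      = ∑ σ ∈ A, G (i σ) := step1
    _ = ∑ τ ∈ A.image i, G τ := step2
    _ ≤ ∑ τ ∈ B, G τ := step3
    _ = ∑ m ∈ Icc 1 x, ∑ q ∈ PP (x / m),
          ((q.2 : ℝ) * Real.log q.1) * (a q.1 * ∏ r ∈ m.primeFactors, a r) := step4
    _ ≤ ∑ m ∈ Icc 1 x, C * (∏ r ∈ m.primeFactors, a r) * Psi (x / m) :=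
        Finset.sum_le_sum step5
    _ ≤ ∑ m ∈ Icc 1 x, 40 * C * x * ((∏ r ∈ m.primeFactors, a r) / m) :=
        Finset.sum_le_sum step6
    _ = 40 * C * x * ∑ m ∈ Icc 1 x, (∏ r ∈ m.primeFactors, a r) / m :=
        (Finset.mul_sum _ _ _).symm

end


end SieveUpperAux

theorem sieve_upper_bound (C : ℝ) (hC : 1 ≤ C) (a : ℕ → ℝ)
    (ha : ∀ p : ℕ, p.Prime → a p ∈ Set.Icc 0 C) :
    ∃ K : ℝ, 0 < K ∧ ∀ x : ℕ, 1 ≤ x →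
      ∑ n ∈ Icc 1 x, ∏ p ∈ n.primeFactors, a p ≤
        K * x * Real.exp (∑ p ∈ (Icc 1 x).filter Nat.Prime, (a p - 1) / p) := by
  classical
  set K : ℝ := (40 * C + 1) * Real.exp (C + 8) with hK
  have hexpCK : (1:ℝ) ≤ Real.exp (C + 8) := Real.one_le_exp (by linarith)
  have hKpos : 0 < K := by
    rw [hK]; nlinarith
  have hK1 : (1:ℝ) ≤ K := by
    rw [hK]; nlinarith
  refine ⟨K, hKpos, ?_⟩
  intro x hx
  have fnonneg : ∀ n : ℕ, 0 ≤ ∏ p ∈ n.primeFactors, a p := by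
    intro n
    apply Finset.prod_nonneg
    intro p hp
    exact (ha p (Nat.prime_of_mem_primeFactors hp)).1
  rcases eq_or_lt_of_le hx with hx1 | hx2
  · -- x = 1
    rw [← hx1]
    have h1 : (Icc 1 1).filter Nat.Prime = ∅ := by decide
    have h2 : Icc 1 1 = {1} := by decide
    rw [h1, h2]
    simp only [Finset.sum_empty, Finset.sum_singleton, Nat.primeFactors_one,
      Finset.prod_empty, Real.exp_zero]
    push_cast
    linarith
  · -- x ≥ 2
    have hx2' : 2 ≤ x := hx2
    have hx2R : (2:ℝ) ≤ x := by exact_mod_cast hx2'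
    have hxR : (0:ℝ) < x := by linarith
    have hlogx : (0:ℝ) < Real.log x := Real.log_pos (by linarith)
    set S := ∑ n ∈ Icc 1 x, ∏ p ∈ n.primeFactors, a p with hS
    set T := ∑ n ∈ Icc 1 x, (∏ p ∈ n.primeFactors, a p) / n with hT
    set E := ∑ p ∈ (Icc 1 x).filter Nat.Prime, (a p - 1) / p with hE
    have hTnn : 0 ≤ T := by
      rw [hT]
      apply Finset.sum_nonneg
      intro n hn
      have h1 : 1 ≤ n := (mem_Icc.mp hn).1
      have : (0:ℝ) < n := by exact_mod_cast h1
      exact div_nonneg (fnonneg n) (le_of_lt this)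
    -- step A : S * log x ≤ (40C+1) x T
    have stepA : S * Real.log x ≤ (40 * C + 1) * x * T := by
      have e1 : S * Real.log x = ∑ n ∈ Icc 1 x, (∏ p ∈ n.primeFactors, a p) * Real.log x := by
        rw [hS, Finset.sum_mul]
      have e2 : ∀ n ∈ Icc 1 x, (∏ p ∈ n.primeFactors, a p) * Real.log x
          ≤ (∏ p ∈ n.primeFactors, a p) * Real.log n
            + (∏ p ∈ n.primeFactors, a p) * ((x:ℝ)/n) := by
        intro n hn
        have h1 : 1 ≤ n := (mem_Icc.mp hn).1
        have hnR : (0:ℝ) < n := by exact_mod_cast h1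
        have hfrac : Real.log x - Real.log n ≤ (x:ℝ)/n := by
          have hdiv : (0:ℝ) < (x:ℝ)/n := by positivity
          have := Real.log_le_sub_one_of_pos hdiv
          rw [Real.log_div (ne_of_gt hxR) (ne_of_gt hnR)] at this
          linarith
        have hf := fnonneg n
        nlinarith [mul_le_mul_of_nonneg_left hfrac hf]
      have e3 := SieveUpperAux.swap_le C a hC ha x hx
      calc S * Real.log x ≤ ∑ n ∈ Icc 1 x, ((∏ p ∈ n.primeFactors, a p) * Real.log n
            + (∏ p ∈ n.primeFactors, a p) * ((x:ℝ)/n)) := by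
            rw [e1]; exact Finset.sum_le_sum e2
        _ = (∑ n ∈ Icc 1 x, (∏ p ∈ n.primeFactors, a p) * Real.log n)
            + ∑ n ∈ Icc 1 x, (∏ p ∈ n.primeFactors, a p) * ((x:ℝ)/n) := by
            rw [Finset.sum_add_distrib]
        _ ≤ 40 * C * x * T + x * T := by
            have e4 : ∑ n ∈ Icc 1 x, (∏ p ∈ n.primeFactors, a p) * ((x:ℝ)/n) = x * T := by
              rw [hT, Finset.mul_sum]
              apply Finset.sum_congr rfl
              intro n hn
              have h1 : 1 ≤ n := (mem_Icc.mp hn).1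
              have hnR : (0:ℝ) < n := by exact_mod_cast h1
              field_simp
            rw [e4]
            have := e3
            rw [← hT] at this
            linarith
        _ = (40 * C + 1) * x * T := by ring
    -- step B : T ≤ exp(C+8) * exp E * log x
    have stepB : T ≤ Real.exp (C + 8) * Real.exp E * Real.log x := by
      have h1 : T ≤ Real.exp (C + ∑ p ∈ (Icc 1 x).filter Nat.Prime, a p / p) := by
        rw [hT]; exact SieveUpperAux.T_le C hC a ha x hx
      have hsplit : ∑ p ∈ (Icc 1 x).filter Nat.Prime, a p / p
          = E + ∑ p ∈ (Icc 1 x).filter Nat.Prime, (1:ℝ)/p := by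
        rw [hE, ← Finset.sum_add_distrib]
        apply Finset.sum_congr rfl
        intro p hp
        have hppos : (0:ℝ) < p := by exact_mod_cast (mem_filter.mp hp).2.pos
        field_simp
        ring
      have hM2 := SieveUpperAux.M2 x hx2'
      have h2 : C + ∑ p ∈ (Icc 1 x).filter Nat.Prime, a p / p
          ≤ (C + 8) + E + Real.log (Real.log x) := by
        rw [hsplit]
        linarith
      calc T ≤ Real.exp (C + ∑ p ∈ (Icc 1 x).filter Nat.Prime, a p / p) := h1
        _ ≤ Real.exp ((C + 8) + E + Real.log (Real.log x)) := Real.exp_le_exp.mpr h2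
        _ = Real.exp (C + 8) * Real.exp E * Real.log x := by
            rw [Real.exp_add, Real.exp_add, Real.exp_log hlogx]
    -- combine
    have hfinal : S * Real.log x ≤ K * x * Real.exp E * Real.log x := by
      calc S * Real.log x ≤ (40 * C + 1) * x * T := stepA
        _ ≤ (40 * C + 1) * x * (Real.exp (C + 8) * Real.exp E * Real.log x) := by
            apply mul_le_mul_of_nonneg_left stepB
            nlinarith
        _ = K * x * Real.exp E * Real.log x := by rw [hK]; ring
    have := le_of_mul_le_mul_right (by linarith [hfinal] :
      S * Real.log x ≤ (K * x * Real.exp E) * Real.log x) hlogx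
    calc S ≤ K * x * Real.exp E := this
      _ = K * x * Real.exp E := rfl
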